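/- (Target model error with only online access, under observational reachability; Lemma mle_target_online of the paper.) Let S be a finite state space, 𝒜 a finite action set, H ∈ ℕ, d₀ an initial distribution on S, d ∈ ℕ, and K ∈ ℕ. Let P_1,…,P_K and P_target be transition models that are low rank with a shared feature: P_{k;h}(s'|s,a) = ⟨φ*_h(s,a), μ*_{k;h}(s')⟩ and P_{target;h}(s'|s,a) = ⟨φ*_h(s,a), μ*_{target;h}(s')⟩. Assume the point-wise linear span condition: for every h and s' there are reals α_{k;h}(s') with μ*_{target;h}(s') = Σ_{k=1}^K α_{k;h}(s') μ*_{k;h}(s') and |α_{k;h}(s')| ≤ α_max. Assume there are policies π_1,…,π_K, λ_min > 0, and ψ_raw > 0 such that for every k and every h: (i) λ_min( Σ_{(s,a)} d^{π_k}_{P_k;h}(s,a) φ*_h(s,a)φ*_h(s,a)ᵀ ) ≥ λ_min, and (ii) d^{π_k}_{P_k;h}(s,a) ≥ ψ_raw · λ_min( Σ_{(s',a')} d^{π_k}_{P_k;h}(s',a') φ*_h(s',a')φ*_h(s',a')ᵀ ) for all (s,a). Let φ̂_h : S×𝒜 → ℝ^d and μ̂_{k;h} : S → ℝ^d be arbitrary,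 define err_{k;h}(s,a) := Σ_{s'} |⟨φ̂_h(s,a), μ̂_{k;h}(s')⟩ − ⟨φ*_h(s,a), μ*_{k;h}(s')⟩|, and suppose the on-policy MLE guarantee: for every h ∈ {0,…,H−1}, Σ_{k=1}^K E_{(s,a)∼d^{π_k}_{P_k;h}}[ err_{k;h}(s,a)² ] ≤ ζ for some ζ ≥ 0. Define μ̃_h(s') := Σ_{k=1}^K α_{k;h}(s') μ̂_{k;h}(s'). Then for every h ∈ {0,…,H−1} and every policy π: Σ_{(s,a)} d^π_{P_target;h}(s,a) · Σ_{s'} |⟨φ̂_h(s,a), μ̃_h(s')⟩ − P_{target;h}(s'|s,a)| ≤ α_max · √( K · ζ / (ψ_raw · λ_min) ). -/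
import Mathlib


/-! Target model error with only online access, under observational reachability. -/

noncomputable section

open Finset

/-- `p` is a probability distribution on the finite type `X`. -/
def IsDist {X : Type*} [Fintype X] (p : X → ℝ) : Prop :=
  (∀ x, 0 ≤ p x) ∧ (∑ x, p x) = 1

variable {S Act : Type*} [Fintype S] [Fintype Act]

/-- Occupancy measure `d^π_{P;h}(s,a)`: the probability that, executing the policy `π`
in the transition model `P` starting from `d0`, the state-action pair at step `h`
is `(s,a)`. -/
def occ (d0 : S → ℝ) (π : ℕ → S → Act → ℝ) (P : ℕ → S → Act → S → ℝ) :
    ℕ → S → Act → ℝ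
  | 0 => fun s a => d0 s * π 0 s a
  | h + 1 => fun s' a' => (∑ s, ∑ a, occ d0 π P h s a * P h s a s') * π (h + 1) s' a'

open Matrix

/-- The smallest eigenvalue of a symmetric matrix, expressed as the minimum of the
Rayleigh quotient `vᵀ M v` over unit vectors `v`. -/
noncomputable def lamMin {d : ℕ} (M : Matrix (Fin d) (Fin d) ℝ) : ℝ :=
  sInf {x | ∃ v : Fin d → ℝ, (∑ i, v i ^ 2) = 1 ∧ x = v ⬝ᵥ M.mulVec v}

lemma occ_nonneg (d0 : S → ℝ) (hd0 : IsDist d0)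
    (π : ℕ → S → Act → ℝ) (hπ : ∀ t s, IsDist (π t s))
    (P : ℕ → S → Act → S → ℝ) (hP : ∀ h s a, IsDist (P h s a)) :
    ∀ h s a, 0 ≤ occ d0 π P h s a := by
  intro h
  induction h with
  | zero => exact fun s a => mul_nonneg (hd0.1 s) ((hπ 0 s).1 a)
  | succ n ih =>
    intro s' a'
    exact mul_nonneg (Finset.sum_nonneg fun s _ => Finset.sum_nonneg fun a _ =>
      mul_nonneg (ih s a) ((hP n s a).1 s')) ((hπ (n+1) s').1 a')

lemma occ_sum_one (d0 : S → ℝ) (hd0 : IsDist d0)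
    (π : ℕ → S → Act → ℝ) (hπ : ∀ t s, IsDist (π t s))
    (P : ℕ → S → Act → S → ℝ) (hP : ∀ h s a, IsDist (P h s a)) :
    ∀ h, ∑ s, ∑ a, occ d0 π P h s a = 1 := by
  intro h
  induction h with
  | zero =>
    simp only [occ]
    rw [← hd0.2]
    refine Finset.sum_congr rfl fun s _ => ?_
    rw [← Finset.mul_sum, (hπ 0 s).2, mul_one]
  | succ n ih =>
    simp only [occ]
    have e1 : ∀ s' : S, ∑ a', (∑ s, ∑ a, occ d0 π P n s a * P n s a s') * π (n+1) s' a'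
        = ∑ s, ∑ a, occ d0 π P n s a * P n s a s' := by
      intro s'
      rw [← Finset.mul_sum, (hπ (n+1) s').2, mul_one]
    calc ∑ s', ∑ a', (∑ s, ∑ a, occ d0 π P n s a * P n s a s') * π (n+1) s' a'
        = ∑ s', ∑ s, ∑ a, occ d0 π P n s a * P n s a s' := by
          exact Finset.sum_congr rfl fun s' _ => e1 s'
      _ = ∑ s, ∑ a, ∑ s', occ d0 π P n s a * P n s a s' := by
          rw [Finset.sum_comm]
          exact Finset.sum_congr rfl fun s _ => Finset.sum_comm
      _ = ∑ s, ∑ a, occ d0 π P n s a := by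
          refine Finset.sum_congr rfl fun s _ => Finset.sum_congr rfl fun a _ => ?_
          rw [← Finset.mul_sum, (hP n s a).2, mul_one]
      _ = 1 := ih

lemma occ_le_one (d0 : S → ℝ) (hd0 : IsDist d0)
    (π : ℕ → S → Act → ℝ) (hπ : ∀ t s, IsDist (π t s))
    (P : ℕ → S → Act → S → ℝ) (hP : ∀ h s a, IsDist (P h s a)) :
    ∀ h s a, occ d0 π P h s a ≤ 1 := by
  intro h s a
  have h1 : occ d0 π P h s a ≤ ∑ a', occ d0 π P h s a' :=
    Finset.single_le_sum (fun a' _ => occ_nonneg d0 hd0 π hπ P hP h s a') (Finset.mem_univ a)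
  have h2 : ∑ a', occ d0 π P h s a' ≤ ∑ s', ∑ a', occ d0 π P h s' a' :=
    Finset.single_le_sum (f := fun s' => ∑ a', occ d0 π P h s' a')
      (fun s' _ => Finset.sum_nonneg fun a' _ => occ_nonneg d0 hd0 π hπ P hP h s' a')
      (Finset.mem_univ s)
  calc occ d0 π P h s a ≤ _ := h1
    _ ≤ _ := h2
    _ = 1 := occ_sum_one d0 hd0 π hπ P hP h

/-- **Target model error with only online access, under observational reachability.**
Under the shared-feature low-rank structure, the point-wise linear span condition,
feature coverage `λ_min(cov_k(h)) ≥ λmin`, observational reachability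
`d^{π_k}_{P_k;h}(s,a) ≥ ψ_raw · λ_min(cov_k(h))`, and the on-policy MLE guarantee,
the expected TV error of the transferred model `⟨φ̂_h, μ̃_h⟩` in the target task
at every step `h < H` and under every policy is at most `αmax √(K ζ / (ψ_raw λmin))`. -/
theorem target_model_error_online
    (H d K : ℕ)
    (d0 : S → ℝ) (hd0 : IsDist d0)
    (Pk : Fin K → ℕ → S → Act → S → ℝ) (hPk : ∀ k h s a, IsDist (Pk k h s a))
    (Pt : ℕ → S → Act → S → ℝ) (hPt : ∀ h s a, IsDist (Pt h s a))
    (φstar : ℕ → S → Act → Fin d → ℝ)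
    (μstar : Fin K → ℕ → S → Fin d → ℝ) (μstarT : ℕ → S → Fin d → ℝ)
    (hlowk : ∀ k h s a s', Pk k h s a s' = ∑ i, φstar h s a i * μstar k h s' i)
    (hlowt : ∀ h s a s', Pt h s a s' = ∑ i, φstar h s a i * μstarT h s' i)
    (α : Fin K → ℕ → S → ℝ) (αmax : ℝ)
    (hspan : ∀ h s' i, μstarT h s' i = ∑ k, α k h s' * μstar k h s' i)
    (hαmax : ∀ k h s', |α k h s'| ≤ αmax)
    (πk : Fin K → ℕ → S → Act → ℝ) (hπk : ∀ k h s, IsDist (πk k h s))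
    (lmin : ℝ) (hlmin : 0 < lmin) (ψraw : ℝ) (hψraw : 0 < ψraw)
    (hcov : ∀ k h, h < H →
      lmin ≤ lamMin (∑ s, ∑ a, occ d0 (πk k) (Pk k) h s a •
        vecMulVec (φstar h s a) (φstar h s a)))
    (hreach : ∀ k h, h < H → ∀ s a,
      ψraw * lamMin (∑ s', ∑ a', occ d0 (πk k) (Pk k) h s' a' •
          vecMulVec (φstar h s' a') (φstar h s' a'))
        ≤ occ d0 (πk k) (Pk k) h s a)
    (φhat : ℕ → S → Act → Fin d → ℝ) (μhat : Fin K → ℕ → S → Fin d → ℝ)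
    (ζ : ℝ) (hζ : 0 ≤ ζ)
    (hmle : ∀ h, h < H →
      ∑ k, ∑ s, ∑ a, occ d0 (πk k) (Pk k) h s a *
          (∑ s', |(∑ i, φhat h s a i * μhat k h s' i)
                  - (∑ i, φstar h s a i * μstar k h s' i)|) ^ 2
        ≤ ζ) :
    ∀ h, h < H → ∀ (π : ℕ → S → Act → ℝ), (∀ t s, IsDist (π t s)) →
      ∑ s, ∑ a, occ d0 π Pt h s a *
          (∑ s', |(∑ i, φhat h s a i * (∑ k, α k h s' * μhat k h s' i)) - Pt h s a s'|)
        ≤ αmax * Real.sqrt ((K : ℝ) * ζ / (ψraw * lmin)) := by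
  intro h hh π hπ
  have hc : 0 < ψraw * lmin := mul_pos hψraw hlmin
  rcases Nat.eq_zero_or_pos K with hK | hK
  · subst hK
    simp [hlowt, hspan]
  -- K ≥ 1
  have hSne : Nonempty S := by
    by_contra hne
    rw [not_nonempty_iff] at hne
    have h2 := hd0.2
    rw [Finset.univ_eq_empty, Finset.sum_empty] at h2
    norm_num at h2
  obtain ⟨s0⟩ := hSne
  have hα0 : 0 ≤ αmax := (abs_nonneg _).trans (hαmax ⟨0, hK⟩ h s0)
  -- abbrev facts
  have hDnn : ∀ s a, 0 ≤ occ d0 π Pt h s a := occ_nonneg d0 hd0 π hπ Pt hPt h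
  have hDsum : ∑ s, ∑ a, occ d0 π Pt h s a = 1 := occ_sum_one d0 hd0 π hπ Pt hPt h
  have hD1 : ∀ s a, occ d0 π Pt h s a ≤ 1 := occ_le_one d0 hd0 π hπ Pt hPt h
  have hDkge : ∀ (k : Fin K) s a, ψraw * lmin ≤ occ d0 (πk k) (Pk k) h s a := by
    intro k s a
    exact le_trans (mul_le_mul_of_nonneg_left (hcov k h hh) hψraw.le) (hreach k h hh s a)
  have hEnn : ∀ (k : Fin K) (s : S) (a : Act),
      0 ≤ ∑ s', |(∑ i, φhat h s a i * μhat k h s' i)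
                  - (∑ i, φstar h s a i * μstar k h s' i)| :=
    fun k s a => Finset.sum_nonneg fun s' _ => abs_nonneg _
  -- Step 1: pointwise bound
  have step1 : ∀ s a,
      (∑ s', |(∑ i, φhat h s a i * (∑ k, α k h s' * μhat k h s' i)) - Pt h s a s'|)
        ≤ αmax * ∑ k, ∑ s', |(∑ i, φhat h s a i * μhat k h s' i)
                  - (∑ i, φstar h s a i * μstar k h s' i)| := by
    intro s a
    have key : ∀ s', (∑ i, φhat h s a i * (∑ k, α k h s' * μhat k h s' i)) - Pt h s a s'
        = ∑ k, α k h s' * ((∑ i, φhat h s a i * μhat k h s' i)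
            - (∑ i, φstar h s a i * μstar k h s' i)) := by
      intro s'
      have e1 : (∑ i, φhat h s a i * (∑ k, α k h s' * μhat k h s' i))
          = ∑ k, α k h s' * (∑ i, φhat h s a i * μhat k h s' i) := by
        simp only [Finset.mul_sum]
        rw [Finset.sum_comm]
        exact Finset.sum_congr rfl fun k _ => Finset.sum_congr rfl fun i _ => by ring
      have e2 : Pt h s a s' = ∑ k, α k h s' * (∑ i, φstar h s a i * μstar k h s' i) := by
        rw [hlowt]
        simp only [hspan, Finset.mul_sum]
        rw [Finset.sum_comm]
        exact Finset.sum_congr rfl fun k _ => Finset.sum_congr rfl fun i _ => by ring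
      rw [e1, e2, ← Finset.sum_sub_distrib]
      exact Finset.sum_congr rfl fun k _ => (mul_sub _ _ _).symm
    calc ∑ s', |(∑ i, φhat h s a i * (∑ k, α k h s' * μhat k h s' i)) - Pt h s a s'|
        ≤ ∑ s', ∑ k, αmax * |(∑ i, φhat h s a i * μhat k h s' i)
            - (∑ i, φstar h s a i * μstar k h s' i)| := by
          refine Finset.sum_le_sum fun s' _ => ?_
          rw [key s']
          refine (Finset.abs_sum_le_sum_abs _ _).trans (Finset.sum_le_sum fun k _ => ?_)
          rw [abs_mul]
          exact mul_le_mul_of_nonneg_right (hαmax k h s') (abs_nonneg _)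
      _ = αmax * ∑ k, ∑ s', |(∑ i, φhat h s a i * μhat k h s' i)
            - (∑ i, φstar h s a i * μstar k h s' i)| := by
          rw [Finset.sum_comm, Finset.mul_sum]
          exact Finset.sum_congr rfl fun k _ => (Finset.mul_sum _ _ _).symm
  -- Step 3: per-task bound via Cauchy–Schwarz
  have perk : ∀ k : Fin K,
      (∑ s, ∑ a, occ d0 π Pt h s a *
          ∑ s', |(∑ i, φhat h s a i * μhat k h s' i)
                  - (∑ i, φstar h s a i * μstar k h s' i)|)
        ≤ Real.sqrt ((∑ s, ∑ a, occ d0 (πk k) (Pk k) h s a *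
            (∑ s', |(∑ i, φhat h s a i * μhat k h s' i)
                  - (∑ i, φstar h s a i * μstar k h s' i)|) ^ 2) / (ψraw * lmin)) := by
    intro k
    set E : S → Act → ℝ := fun s a => ∑ s', |(∑ i, φhat h s a i * μhat k h s' i)
                  - (∑ i, φstar h s a i * μstar k h s' i)| with hEdef
    have hnn : 0 ≤ ∑ s, ∑ a, occ d0 π Pt h s a * E s a :=
      Finset.sum_nonneg fun s _ => Finset.sum_nonneg fun a _ =>
        mul_nonneg (hDnn s a) (hEnn k s a)
    have hQnn : 0 ≤ (∑ s, ∑ a, occ d0 (πk k) (Pk k) h s a * E s a ^ 2) / (ψraw * lmin) := by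
      refine div_nonneg (Finset.sum_nonneg fun s _ => Finset.sum_nonneg fun a _ =>
        mul_nonneg (le_trans hc.le (hDkge k s a)) (sq_nonneg _)) hc.le
    rw [Real.le_sqrt hnn hQnn]
    have g1 : (∑ s, ∑ a, occ d0 π Pt h s a * E s a)
        = ∑ p : S × Act, occ d0 π Pt h p.1 p.2 * E p.1 p.2 :=
      (Fintype.sum_prod_type (f := fun p : S × Act => occ d0 π Pt h p.1 p.2 * E p.1 p.2)).symm
    have cs : (∑ p : S × Act, Real.sqrt (occ d0 π Pt h p.1 p.2) *
          (Real.sqrt (occ d0 π Pt h p.1 p.2) * E p.1 p.2)) ^ 2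
        ≤ (∑ p : S × Act, Real.sqrt (occ d0 π Pt h p.1 p.2) ^ 2) *
          ∑ p : S × Act, (Real.sqrt (occ d0 π Pt h p.1 p.2) * E p.1 p.2) ^ 2 :=
      Finset.sum_mul_sq_le_sq_mul_sq _ _ _
    have ed : ∀ p : S × Act, Real.sqrt (occ d0 π Pt h p.1 p.2) *
          (Real.sqrt (occ d0 π Pt h p.1 p.2) * E p.1 p.2) = occ d0 π Pt h p.1 p.2 * E p.1 p.2 := by
      intro p
      rw [← mul_assoc, Real.mul_self_sqrt (hDnn p.1 p.2)]
    have e3 : (∑ p : S × Act, Real.sqrt (occ d0 π Pt h p.1 p.2) ^ 2) = 1 := by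
      rw [Finset.sum_congr rfl fun p _ => Real.sq_sqrt (hDnn p.1 p.2),
        Fintype.sum_prod_type, hDsum]
    have e4 : ∀ p : S × Act, (Real.sqrt (occ d0 π Pt h p.1 p.2) * E p.1 p.2) ^ 2
        = occ d0 π Pt h p.1 p.2 * E p.1 p.2 ^ 2 := by
      intro p
      rw [mul_pow, Real.sq_sqrt (hDnn p.1 p.2)]
    calc (∑ s, ∑ a, occ d0 π Pt h s a * E s a) ^ 2
        = (∑ p : S × Act, Real.sqrt (occ d0 π Pt h p.1 p.2) *
            (Real.sqrt (occ d0 π Pt h p.1 p.2) * E p.1 p.2)) ^ 2 := by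
          rw [g1, Finset.sum_congr rfl fun p _ => (ed p)]
      _ ≤ (∑ p : S × Act, Real.sqrt (occ d0 π Pt h p.1 p.2) ^ 2) *
            ∑ p : S × Act, (Real.sqrt (occ d0 π Pt h p.1 p.2) * E p.1 p.2) ^ 2 := cs
      _ = ∑ p : S × Act, occ d0 π Pt h p.1 p.2 * E p.1 p.2 ^ 2 := by
          rw [e3, one_mul]
          exact Finset.sum_congr rfl fun p _ => e4 p
      _ ≤ ∑ p : S × Act, (occ d0 (πk k) (Pk k) h p.1 p.2 / (ψraw * lmin)) * E p.1 p.2 ^ 2 := by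
          refine Finset.sum_le_sum fun p _ => ?_
          refine mul_le_mul_of_nonneg_right ?_ (sq_nonneg _)
          exact le_trans (hD1 p.1 p.2) ((one_le_div hc).2 (hDkge k p.1 p.2))
      _ = (∑ s, ∑ a, occ d0 (πk k) (Pk k) h s a * E s a ^ 2) / (ψraw * lmin) := by
          rw [show (∑ s, ∑ a, occ d0 (πk k) (Pk k) h s a * E s a ^ 2)
              = ∑ p : S × Act, occ d0 (πk k) (Pk k) h p.1 p.2 * E p.1 p.2 ^ 2 from
            (Fintype.sum_prod_type (f := fun p : S × Act =>
              occ d0 (πk k) (Pk k) h p.1 p.2 * E p.1 p.2 ^ 2)).symm,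
            Finset.sum_div]
          exact Finset.sum_congr rfl fun p _ => by ring
  -- Step 4: Cauchy–Schwarz over tasks
  have final : (∑ k : Fin K, Real.sqrt ((∑ s, ∑ a, occ d0 (πk k) (Pk k) h s a *
            (∑ s', |(∑ i, φhat h s a i * μhat k h s' i)
                  - (∑ i, φstar h s a i * μstar k h s' i)|) ^ 2) / (ψraw * lmin)))
        ≤ Real.sqrt ((K : ℝ) * ζ / (ψraw * lmin)) := by
    have hζknn : ∀ k : Fin K, 0 ≤ (∑ s, ∑ a, occ d0 (πk k) (Pk k) h s a *
            (∑ s', |(∑ i, φhat h s a i * μhat k h s' i)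
                  - (∑ i, φstar h s a i * μstar k h s' i)|) ^ 2) / (ψraw * lmin) := by
      intro k
      refine div_nonneg (Finset.sum_nonneg fun s _ => Finset.sum_nonneg fun a _ =>
        mul_nonneg (le_trans hc.le (hDkge k s a)) (sq_nonneg _)) hc.le
    have hnn : 0 ≤ ∑ k : Fin K, Real.sqrt ((∑ s, ∑ a, occ d0 (πk k) (Pk k) h s a *
            (∑ s', |(∑ i, φhat h s a i * μhat k h s' i)
                  - (∑ i, φstar h s a i * μstar k h s' i)|) ^ 2) / (ψraw * lmin)) :=
      Finset.sum_nonneg fun k _ => Real.sqrt_nonneg _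
    rw [Real.le_sqrt hnn (div_nonneg (mul_nonneg (Nat.cast_nonneg K) hζ) hc.le)]
    have cs2 : (∑ k : Fin K, (1:ℝ) * Real.sqrt ((∑ s, ∑ a, occ d0 (πk k) (Pk k) h s a *
            (∑ s', |(∑ i, φhat h s a i * μhat k h s' i)
                  - (∑ i, φstar h s a i * μstar k h s' i)|) ^ 2) / (ψraw * lmin))) ^ 2
        ≤ (∑ _k : Fin K, (1:ℝ) ^ 2) *
          ∑ k : Fin K, Real.sqrt ((∑ s, ∑ a, occ d0 (πk k) (Pk k) h s a *
            (∑ s', |(∑ i, φhat h s a i * μhat k h s' i)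
                  - (∑ i, φstar h s a i * μstar k h s' i)|) ^ 2) / (ψraw * lmin)) ^ 2 :=
      Finset.sum_mul_sq_le_sq_mul_sq _ _ _
    simp only [one_mul, one_pow, Finset.sum_const, Finset.card_univ, Fintype.card_fin,
      nsmul_eq_mul] at cs2
    refine cs2.trans ?_
    have e5 : (∑ k : Fin K, Real.sqrt ((∑ s, ∑ a, occ d0 (πk k) (Pk k) h s a *
            (∑ s', |(∑ i, φhat h s a i * μhat k h s' i)
                  - (∑ i, φstar h s a i * μstar k h s' i)|) ^ 2) / (ψraw * lmin)) ^ 2)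
        = (∑ k : Fin K, ∑ s, ∑ a, occ d0 (πk k) (Pk k) h s a *
            (∑ s', |(∑ i, φhat h s a i * μhat k h s' i)
                  - (∑ i, φstar h s a i * μstar k h s' i)|) ^ 2) / (ψraw * lmin) := by
      rw [Finset.sum_div]
      exact Finset.sum_congr rfl fun k _ => Real.sq_sqrt (hζknn k)
    rw [e5, mul_one, mul_div_assoc]
    refine mul_le_mul_of_nonneg_left ?_ (Nat.cast_nonneg K)
    gcongr
    exact hmle h hh
  -- assemble
  calc ∑ s, ∑ a, occ d0 π Pt h s a *
          (∑ s', |(∑ i, φhat h s a i * (∑ k, α k h s' * μhat k h s' i)) - Pt h s a s'|)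
      ≤ ∑ s, ∑ a, occ d0 π Pt h s a *
          (αmax * ∑ k, ∑ s', |(∑ i, φhat h s a i * μhat k h s' i)
                  - (∑ i, φstar h s a i * μstar k h s' i)|) := by
        refine Finset.sum_le_sum fun s _ => Finset.sum_le_sum fun a _ => ?_
        exact mul_le_mul_of_nonneg_left (step1 s a) (hDnn s a)
    _ = ∑ s, ∑ a, ∑ k, αmax * (occ d0 π Pt h s a *
          ∑ s', |(∑ i, φhat h s a i * μhat k h s' i)
                  - (∑ i, φstar h s a i * μstar k h s' i)|) := by
        refine Finset.sum_congr rfl fun s _ => Finset.sum_congr rfl fun a _ => ?_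
        rw [Finset.mul_sum, Finset.mul_sum]
        exact Finset.sum_congr rfl fun k _ => by ring
    _ = ∑ k, ∑ s, ∑ a, αmax * (occ d0 π Pt h s a *
          ∑ s', |(∑ i, φhat h s a i * μhat k h s' i)
                  - (∑ i, φstar h s a i * μstar k h s' i)|) := by
        have e6 : ∀ s : S, (∑ a, ∑ k, αmax * (occ d0 π Pt h s a *
            ∑ s', |(∑ i, φhat h s a i * μhat k h s' i)
                  - (∑ i, φstar h s a i * μstar k h s' i)|))
            = ∑ k, ∑ a, αmax * (occ d0 π Pt h s a *
            ∑ s', |(∑ i, φhat h s a i * μhat k h s' i)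
                  - (∑ i, φstar h s a i * μstar k h s' i)|) := fun s => Finset.sum_comm
        rw [Finset.sum_congr rfl fun s _ => e6 s]
        exact Finset.sum_comm
    _ = αmax * ∑ k, ∑ s, ∑ a, occ d0 π Pt h s a *
          ∑ s', |(∑ i, φhat h s a i * μhat k h s' i)
                  - (∑ i, φstar h s a i * μstar k h s' i)| := by
        simp only [Finset.mul_sum]
    _ ≤ αmax * ∑ k : Fin K, Real.sqrt ((∑ s, ∑ a, occ d0 (πk k) (Pk k) h s a *
            (∑ s', |(∑ i, φhat h s a i * μhat k h s' i)
                  - (∑ i, φstar h s a i * μstar k h s' i)|) ^ 2) / (ψraw * lmin)) := by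
        exact mul_le_mul_of_nonneg_left (Finset.sum_le_sum fun k _ => perk k) hα0
    _ ≤ αmax * Real.sqrt ((K : ℝ) * ζ / (ψraw * lmin)) :=
        mul_le_mul_of_nonneg_left final hα0
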